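/- Let K be an algebraically closed field of characteristic 0, n a finite-dimensional nilpotent Lie algebra over K, a ⊆ n a central ideal contained in [n,n], and R a completely reducible Lie subalgebra of Der(n) leaving a stable. Assume that the only R-equivariant K-linear map n∧a → a is zero, where n∧a is the image of n⊗a in Λ²n (with the natural R-actions). Then for every R-equivariant alternating bilinear map ψ : n × n → a satisfying the cocycle condition ψ([x,y], z) + ψ([y,z], x) + ψ([z,x], y) = 0 for all x, y, z ∈ n, and for every t ∈ K, the bracket [x,y]_t := [x,y] + t·ψ(x,y) is a Lie bracket on the vector space n (i.e. the class of ψ is integrable: [i₂(ψ), i₂(ψ)] = 0). -/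

import Mathlib

attribute [local instance 100] LieRing.ofAssociativeRing

/-- Let `n` be a finite-dimensional nilpotent Lie algebra over an
algebraically closed field `K` of characteristic 0, `a ⊆ n` a central ideal contained
in `[n,n]`, and `R` a completely reducible Lie subalgebra of `Der(n)` leaving `a`
stable.  The hypothesis `Hom_R(n∧a, a) = 0` is encoded via bilinear maps `β` whose
restriction to `n × a` has values in `a`, is antisymmetric on `a × a` and
`R`-equivariant (such restrictions correspond exactly to linear maps `n∧a → a`).
Then every `R`-equivariant alternating 2-cocycle `ψ` with values in `a` is integrable:
for every `t ∈ K`, `[x,y] + t·ψ(x,y)` is a Lie bracket. -/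
theorem stmt_15 {K : Type} [Field K] [CharZero K] [IsAlgClosed K]
    {N : Type} [LieRing N] [LieAlgebra K N] [FiniteDimensional K N]
    [LieRing.IsNilpotent N]
    (a : LieIdeal K N)
    (hcentral : ∀ c ∈ a, ∀ x : N, ⁅c, x⁆ = 0)
    (hsub : a ≤ ⁅(⊤ : LieIdeal K N), (⊤ : LieIdeal K N)⁆)
    -- `R`: a Lie subalgebra of `Der(n)` (inside `End(n)` with the commutator bracket)
    (R : LieSubalgebra K (Module.End K N))
    (hder : ∀ δ ∈ R, ∀ x y : N, δ ⁅x, y⁆ = ⁅δ x, y⁆ + ⁅x, δ y⁆)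
    (hstab : ∀ δ ∈ R, ∀ c ∈ a, δ c ∈ a)
    -- complete reducibility: the natural representation of `R` on `n` is semisimple
    (hss : ∀ W : Submodule K N, (∀ δ ∈ R, ∀ x ∈ W, δ x ∈ W) →
      ∃ W' : Submodule K N, IsCompl W W' ∧ ∀ δ ∈ R, ∀ x ∈ W', δ x ∈ W')
    -- the only `R`-equivariant map `n∧a → a` is zero
    (hHom : ∀ β : N →ₗ[K] N →ₗ[K] N,
      (∀ x : N, ∀ c ∈ a, β x c ∈ a) →
      (∀ c ∈ a, ∀ c' ∈ a, β c c' = -β c' c) →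
      (∀ δ ∈ R, ∀ x : N, ∀ c ∈ a, δ (β x c) = β (δ x) c + β x (δ c)) →
      ∀ x : N, ∀ c ∈ a, β x c = 0) :
    ∀ ψ : N →ₗ[K] N →ₗ[K] N,
      (∀ x, ψ x x = 0) →
      (∀ x y, ψ x y ∈ a) →
      (∀ δ ∈ R, ∀ x y, δ (ψ x y) = ψ (δ x) y + ψ x (δ y)) →
      (∀ x y z, ψ ⁅x, y⁆ z + ψ ⁅y, z⁆ x + ψ ⁅z, x⁆ y = 0) →
      ∀ t : K, ∀ x y z : N,
        (⁅(⁅x, y⁆ + t • ψ x y), z⁆ + t • ψ (⁅x, y⁆ + t • ψ x y) z)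
          + (⁅(⁅y, z⁆ + t • ψ y z), x⁆ + t • ψ (⁅y, z⁆ + t • ψ y z) x)
          + (⁅(⁅z, x⁆ + t • ψ z x), y⁆ + t • ψ (⁅z, x⁆ + t • ψ z x) y) = 0 := by
  intro ψ halt hval heq hcoc t x y z
  have hanti : ∀ u v : N, ψ u v = -ψ v u := by
    intro u v
    have h := halt (u + v)
    simp only [map_add, LinearMap.add_apply, halt] at h
    have h2 : ψ u v + ψ v u = 0 := by
      rw [← h]; abel
    exact eq_neg_of_add_eq_zero_left h2
  have hzero : ∀ x : N, ∀ c ∈ a, ψ x c = 0 :=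
    hHom ψ (fun x c _ => hval x c) (fun c _ c' _ => hanti c c') (fun δ hδ x c _ => heq δ hδ x c)
  have hpsi : ∀ u v w : N, ψ (ψ u v) w = 0 := by
    intro u v w
    rw [hanti]
    simp [hzero w _ (hval u v)]
  have hbr : ∀ u v w : N, ⁅ψ u v, w⁆ = 0 := fun u v w => hcentral _ (hval u v) w
  have hc := hcoc x y z
  simp only [add_lie, lie_smul, smul_lie, map_add, map_smul, LinearMap.add_apply,
    LinearMap.smul_apply, hbr, hpsi, smul_zero, add_zero, zero_add]
  have hj : ⁅⁅x, y⁆, z⁆ + ⁅⁅y, z⁆, x⁆ + ⁅⁅z, x⁆, y⁆ = 0 := by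
    rw [← lie_skew ⁅x, y⁆ z, ← lie_skew ⁅y, z⁆ x, ← lie_skew ⁅z, x⁆ y]
    have hjac : -(⁅x, ⁅y, z⁆⁆ + ⁅y, ⁅z, x⁆⁆ + ⁅z, ⁅x, y⁆⁆) = (0 : N) := by
      rw [lie_jacobi]; simp
    rw [← hjac]; abel
  calc ⁅⁅x, y⁆, z⁆ + t • ψ ⁅x, y⁆ z + (⁅⁅y, z⁆, x⁆ + t • ψ ⁅y, z⁆ x)
        + (⁅⁅z, x⁆, y⁆ + t • ψ ⁅z, x⁆ y)
      = (⁅⁅x, y⁆, z⁆ + ⁅⁅y, z⁆, x⁆ + ⁅⁅z, x⁆, y⁆)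
        + t • (ψ ⁅x, y⁆ z + ψ ⁅y, z⁆ x + ψ ⁅z, x⁆ y) := by
        rw [smul_add, smul_add]; abel
    _ = 0 := by rw [hj, hc, smul_zero, add_zero]
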